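/- Define Q(f,g) = ∫_{-1}^{1} f(g⁻¹(t)) dt for f, g ∈ G₀, where G₀ = {f ∈ G : ∫_{-1}^{1} f = 0}. Then Q(g,f) = -Q(f,g) and Q(f,g) = Q(g*,f*) where f*(t) = -f(-t). In particular Q(f,f) = 0, and Q(f,g) = 0 whenever f and g are both odd elements of G. -/

import Mathlib

/-- `f*(t) = -f(-t)`. -/
def negConj (f : ℝ → ℝ) : ℝ → ℝ := fun t => -f (-t)

/-- An orientation-preserving homeomorphism of `[-1,1]`. -/
def IsHPM (f : ℝ → ℝ) : Prop :=
  ContinuousOn f (Set.Icc (-1) 1) ∧ StrictMonoOn f (Set.Icc (-1) 1) ∧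
    Set.MapsTo f (Set.Icc (-1) 1) (Set.Icc (-1) 1) ∧ f (-1) = -1 ∧ f 1 = 1

open MeasureTheory Set

lemma young (h hinv : ℝ → ℝ)
    (hm : StrictMonoOn h (Set.Icc (-1) 1))
    (hmaps : Set.MapsTo h (Set.Icc (-1) 1) (Set.Icc (-1) 1))
    (hinvmaps : Set.MapsTo hinv (Set.Icc (-1) 1) (Set.Icc (-1) 1))
    (hlr : ∀ t ∈ Set.Icc (-1:ℝ) 1, hinv (h t) = t ∧ h (hinv t) = t) :
    (∫ t in (-1:ℝ)..1, hinv t) = -∫ t in (-1:ℝ)..1, h t := by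
  -- clamp
  set c : ℝ → ℝ := fun t => min 1 (max (-1) t) with hc
  have hcmem : ∀ t, c t ∈ Set.Icc (-1:ℝ) 1 := fun t => by
    constructor
    · simp only [hc, le_min_iff]
      constructor
      · linarith
      · exact le_max_left _ _
    · exact min_le_left _ _
  have hceq : ∀ t ∈ Set.Icc (-1:ℝ) 1, c t = t := fun t ht => by
    simp [hc, max_eq_right ht.1, min_eq_right ht.2]
  have hcmono : Monotone c := by
    intro a b hab
    exact min_le_min le_rfl (max_le_max le_rfl hab)
  set H : ℝ → ℝ := fun t => h (c t) with hH
  set Hinv : ℝ → ℝ := fun t => hinv (c t) with hHinv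
  have hinvmono : MonotoneOn hinv (Set.Icc (-1:ℝ) 1) := by
    intro a ha b hb hab
    by_contra hlt
    push_neg at hlt
    have := hm (hinvmaps hb) (hinvmaps ha) hlt
    rw [(hlr a ha).2, (hlr b hb).2] at this
    linarith
  have hHmono : Monotone H := fun a b hab => (hm.monotoneOn) (hcmem a) (hcmem b) (hcmono hab)
  have hHinvmono : Monotone Hinv := fun a b hab => hinvmono (hcmem a) (hcmem b) (hcmono hab)
  have hHmem : ∀ t, H t ∈ Set.Icc (-1:ℝ) 1 := fun t => hmaps (hcmem t)
  have hHinvmem : ∀ t, Hinv t ∈ Set.Icc (-1:ℝ) 1 := fun t => hinvmaps (hcmem t)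
  -- the region
  set B : Set (ℝ × ℝ) := regionBetween H (fun _ => (1:ℝ)) (Set.Ioo (-1) 1) with hB
  have hBmeas : MeasurableSet B :=
    measurableSet_regionBetween hHmono.measurable measurable_const measurableSet_Ioo
  have hHint : IntegrableOn H (Set.Ioo (-1:ℝ) 1) :=
    ((hHmono.monotoneOn _).integrableOn_isCompact isCompact_Icc).mono_set Ioo_subset_Icc_self
  have hHinvint : IntegrableOn Hinv (Set.Ioo (-1:ℝ) 1) :=
    ((hHinvmono.monotoneOn _).integrableOn_isCompact isCompact_Icc).mono_set Ioo_subset_Icc_self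
  -- first computation
  have h1 : volume.prod volume B = ENNReal.ofReal (∫ t in Set.Ioo (-1:ℝ) 1, (1 - H t)) := by
    rw [hB, volume_regionBetween_eq_integral hHint (integrableOn_const measure_Ioo_lt_top.ne)
      measurableSet_Ioo (fun x _ => (hHmem x).2)]
    rfl
  -- second computation, via slices in the other direction
  have h2 : volume.prod volume B = ENNReal.ofReal (∫ t in Set.Ioo (-1:ℝ) 1, (Hinv t + 1)) := by
    rw [Measure.prod_apply_symm hBmeas]
    have hslice : ∀ y : ℝ, ((fun x => (x, y)) ⁻¹' B) =
        if y ∈ Set.Ioo (-1:ℝ) 1 then Set.Ioo (-1) (Hinv y) else ∅ := by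
      intro y
      split_ifs with hy
      · ext x
        have hyI : y ∈ Set.Icc (-1:ℝ) 1 := Ioo_subset_Icc_self hy
        have hHinvy : Hinv y = hinv y := by rw [hHinv]; simp only; rw [hceq y hyI]
        simp only [hB, regionBetween, Set.mem_preimage, Set.mem_setOf_eq, Set.mem_Ioo]
        constructor
        · rintro ⟨hx, hxy, -⟩
          have hxI : x ∈ Set.Icc (-1:ℝ) 1 := Ioo_subset_Icc_self hx
          have hHx : H x = h x := by rw [hH]; simp only; rw [hceq x hxI]
          rw [hHx] at hxy
          have : h x < h (hinv y) := by rw [(hlr y hyI).2]; exact hxy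
          have := (hm.lt_iff_lt hxI (hinvmaps hyI)).mp this
          exact ⟨hx.1, by rw [hHinvy]; exact this⟩
        · rintro ⟨hx1, hx2⟩
          rw [hHinvy] at hx2
          have hx2' : x < 1 := lt_of_lt_of_le hx2 (hinvmaps hyI).2
          have hxI : x ∈ Set.Icc (-1:ℝ) 1 := ⟨le_of_lt hx1, le_of_lt hx2'⟩
          have hHx : H x = h x := by rw [hH]; simp only; rw [hceq x hxI]
          refine ⟨⟨hx1, hx2'⟩, ?_, hy.2⟩
          rw [hHx]
          have := hm hxI (hinvmaps hyI) hx2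
          rw [(hlr y hyI).2] at this
          exact this
      · ext x
        simp only [hB, regionBetween, Set.mem_preimage, Set.mem_setOf_eq, Set.mem_Ioo,
          Set.mem_empty_iff_false, iff_false]
        rintro ⟨hx, hxy, hy1⟩
        exact hy ⟨lt_of_le_of_lt (hHmem x).1 hxy, hy1⟩
    calc ∫⁻ y, volume ((fun x => (x, y)) ⁻¹' B)
        = ∫⁻ y, (Set.Ioo (-1:ℝ) 1).indicator (fun y => ENNReal.ofReal (Hinv y + 1)) y := by
          refine lintegral_congr fun y => ?_
          rw [hslice]
          split_ifs with hy
          · rw [Set.indicator_of_mem hy, Real.volume_Ioo, sub_neg_eq_add]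
          · rw [Set.indicator_of_notMem hy, measure_empty]
      _ = ∫⁻ y in Set.Ioo (-1:ℝ) 1, ENNReal.ofReal (Hinv y + 1) := by
          rw [lintegral_indicator measurableSet_Ioo]
      _ = ENNReal.ofReal (∫ t in Set.Ioo (-1:ℝ) 1, (Hinv t + 1)) := by
          rw [ofReal_integral_eq_lintegral_ofReal (f := fun t => Hinv t + 1)
            (hHinvint.add (integrableOn_const measure_Ioo_lt_top.ne))
            (Filter.Eventually.of_forall fun y => by show (0:ℝ) ≤ Hinv y + 1; linarith [(hHinvmem y).1])]
  -- conclude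
  have key : (∫ t in Set.Ioo (-1:ℝ) 1, (1 - H t)) = ∫ t in Set.Ioo (-1:ℝ) 1, (Hinv t + 1) := by
    have n1 : (0:ℝ) ≤ ∫ t in Set.Ioo (-1:ℝ) 1, (1 - H t) :=
      setIntegral_nonneg measurableSet_Ioo fun x _ => by linarith [(hHmem x).2]
    have n2 : (0:ℝ) ≤ ∫ t in Set.Ioo (-1:ℝ) 1, (Hinv t + 1) :=
      setIntegral_nonneg measurableSet_Ioo fun x _ => by linarith [(hHinvmem x).1]
    have := h1.symm.trans h2
    rwa [ENNReal.ofReal_eq_ofReal_iff n1 n2] at this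
  have hconst : (∫ _t in Set.Ioo (-1:ℝ) 1, (1:ℝ)) = 2 := by
    rw [setIntegral_const, measureReal_def, Real.volume_Ioo, smul_eq_mul, mul_one,
      ENNReal.toReal_ofReal (by norm_num)]
    norm_num
  have hsub : (∫ t in Set.Ioo (-1:ℝ) 1, (1 - H t)) = 2 - ∫ t in Set.Ioo (-1:ℝ) 1, H t := by
    rw [integral_sub (integrableOn_const (C := (1:ℝ)) measure_Ioo_lt_top.ne) hHint, hconst]
  have hadd : (∫ t in Set.Ioo (-1:ℝ) 1, (Hinv t + 1)) = (∫ t in Set.Ioo (-1:ℝ) 1, Hinv t) + 2 := by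
    rw [integral_add hHinvint (integrableOn_const (C := (1:ℝ)) measure_Ioo_lt_top.ne), hconst]
  have key2 : (∫ t in Set.Ioo (-1:ℝ) 1, Hinv t) = -∫ t in Set.Ioo (-1:ℝ) 1, H t := by
    rw [hsub, hadd] at key; linarith
  have e1 : (∫ t in (-1:ℝ)..1, hinv t) = ∫ t in Set.Ioo (-1:ℝ) 1, Hinv t := by
    rw [intervalIntegral.integral_of_le (by norm_num : (-1:ℝ) ≤ 1), integral_Ioc_eq_integral_Ioo]
    refine setIntegral_congr_fun measurableSet_Ioo fun t ht => ?_
    rw [hHinv]; simp only; rw [hceq t (Ioo_subset_Icc_self ht)]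
  have e2 : (∫ t in (-1:ℝ)..1, h t) = ∫ t in Set.Ioo (-1:ℝ) 1, H t := by
    rw [intervalIntegral.integral_of_le (by norm_num : (-1:ℝ) ≤ 1), integral_Ioc_eq_integral_Ioo]
    refine setIntegral_congr_fun measurableSet_Ioo fun t ht => ?_
    rw [hH]; simp only; rw [hceq t (Ioo_subset_Icc_self ht)]
  rw [e1, e2, key2]

lemma inv_strictMonoOn (f finv : ℝ → ℝ) (hfm : StrictMonoOn f (Set.Icc (-1) 1))
    (hfinv : ∀ t ∈ Set.Icc (-1:ℝ) 1, finv (f t) = t ∧ f (finv t) = t)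
    (hfinvmaps : Set.MapsTo finv (Set.Icc (-1) 1) (Set.Icc (-1) 1)) :
    StrictMonoOn finv (Set.Icc (-1) 1) := by
  intro a ha b hb hab
  by_contra hle
  push_neg at hle
  have := hfm.monotoneOn (hfinvmaps hb) (hfinvmaps ha) hle
  rw [(hfinv a ha).2, (hfinv b hb).2] at this
  linarith

lemma uIccIcc : Set.uIcc (-1:ℝ) 1 = Set.Icc (-1) 1 := Set.uIcc_of_le (by norm_num)

/-- For f, g ∈ G₀ with inverses finv, ginv, and Q(f,g) = ∫_{-1}^1 f(g⁻¹(t)) dt: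
Q(g,f) = -Q(f,g); Q(f,g) = Q(g*,f*) (note (f*)⁻¹ = (f⁻¹)*); Q(f,f) = 0; and
Q(f,g) = 0 whenever f and g are both odd. -/
theorem stmt5 (f g finv ginv : ℝ → ℝ)
    (hf : IsHPM f) (hg : IsHPM g)
    (hf0 : (∫ t in (-1:ℝ)..1, f t) = 0) (hg0 : (∫ t in (-1:ℝ)..1, g t) = 0)
    (hfinv : ∀ t ∈ Set.Icc (-1:ℝ) 1, finv (f t) = t ∧ f (finv t) = t)
    (hginv : ∀ t ∈ Set.Icc (-1:ℝ) 1, ginv (g t) = t ∧ g (ginv t) = t)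
    (hfinvmaps : Set.MapsTo finv (Set.Icc (-1) 1) (Set.Icc (-1) 1))
    (hginvmaps : Set.MapsTo ginv (Set.Icc (-1) 1) (Set.Icc (-1) 1)) :
    (∫ t in (-1:ℝ)..1, g (finv t)) = -∫ t in (-1:ℝ)..1, f (ginv t) ∧
    (∫ t in (-1:ℝ)..1, f (ginv t)) = ∫ t in (-1:ℝ)..1, negConj g (negConj finv t) ∧
    (∫ t in (-1:ℝ)..1, f (finv t)) = 0 ∧
    ((∀ t, f (-t) = -f t) → (∀ t, g (-t) = -g t) →
      (∫ t in (-1:ℝ)..1, f (ginv t)) = 0) := by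
  obtain ⟨hfc, hfm, hfmaps, hfn1, hfp1⟩ := hf
  obtain ⟨hgc, hgm, hgmaps, hgn1, hgp1⟩ := hg
  have hfinvsm := inv_strictMonoOn f finv hfm hfinv hfinvmaps
  -- Part 1 via the Young-type lemma
  have P1 : (∫ t in (-1:ℝ)..1, f (ginv t)) = -∫ t in (-1:ℝ)..1, g (finv t) := by
    refine young (fun t => g (finv t)) (fun t => f (ginv t))
      (fun a ha b hb hab => hgm (hfinvmaps ha) (hfinvmaps hb) (hfinvsm ha hb hab))
      (fun t ht => hgmaps (hfinvmaps ht))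
      (fun t ht => hfmaps (hginvmaps ht))
      (fun t ht => ?_)
    constructor
    · have h1 : ginv (g (finv t)) = finv t := (hginv (finv t) (hfinvmaps ht)).1
      simp only [h1, (hfinv t ht).2]
    · have h1 : finv (f (ginv t)) = ginv t := (hfinv (ginv t) (hginvmaps ht)).1
      simp only [h1, (hginv t ht).2]
  refine ⟨by linarith, ?_, ?_, ?_⟩
  -- Part 2
  · have e1 : (∫ t in (-1:ℝ)..1, negConj g (negConj finv t)) =
        ∫ t in (-1:ℝ)..1, -(g (finv (-t))) := by
      refine intervalIntegral.integral_congr fun t _ => ?_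
      simp [negConj, neg_neg]
    have e2 : (∫ t in (-1:ℝ)..1, -(g (finv (-t)))) = ∫ t in (-1:ℝ)..1, -(g (finv t)) := by
      rw [intervalIntegral.integral_comp_neg (f := fun t => -(g (finv t)))]
      norm_num
    rw [e1, e2, intervalIntegral.integral_neg, P1]
  -- Part 3
  · have e3 : (∫ t in (-1:ℝ)..1, f (finv t)) = ∫ t in (-1:ℝ)..1, t := by
      refine intervalIntegral.integral_congr fun t ht => ?_
      exact (hfinv t (uIccIcc ▸ ht)).2
    rw [e3, integral_id]
    norm_num
  -- Part 4
  · intro hfodd hgodd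
    have hginvodd : ∀ t ∈ Set.Icc (-1:ℝ) 1, ginv (-t) = -ginv t := by
      intro t ht
      have h1 := hginvmaps ht
      have h2 : -ginv t ∈ Set.Icc (-1:ℝ) 1 := ⟨by linarith [h1.2], by linarith [h1.1]⟩
      have h3 := (hginv (-ginv t) h2).1
      rw [hgodd (ginv t), (hginv t ht).2] at h3
      exact h3
    have e4 : (∫ t in (-1:ℝ)..1, f (ginv (-t))) = ∫ t in (-1:ℝ)..1, f (ginv t) := by
      rw [intervalIntegral.integral_comp_neg (f := fun t => f (ginv t))]
      norm_num
    have e5 : (∫ t in (-1:ℝ)..1, f (ginv (-t))) = ∫ t in (-1:ℝ)..1, -(f (ginv t)) := by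
      refine intervalIntegral.integral_congr fun t ht => ?_
      rw [hginvodd t (uIccIcc ▸ ht), hfodd]
    rw [e5, intervalIntegral.integral_neg] at e4
    linarith
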